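/- Let M be a compact metric space, x : ℕ → M a sequence, and K ∈ ℕ. Suppose that for every n ∈ ℕ for which the set X_n = {x_0, ..., x_n} has at least two elements, |NND(X_n)| ≤ K. Then the set of points of X = {x_i : i ∈ ℕ} that are isolated in X (with the subspace topology) is finite. -/

import Mathlib

/-- The nearest neighbor distance of `x` in `X`. -/
noncomputable def nnd {M : Type*} [MetricSpace M] (x : M) (X : Set M) : ℝ :=
  sInf (dist x '' (X \ {x}))

/-- The set of nearest neighbor distances of a set `X`. -/
noncomputable def NND {M : Type*} [MetricSpace M] (X : Set M) : Set ℝ :=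
  (fun x => nnd x X) '' X

lemma nnd_bddBelow {M : Type*} [MetricSpace M] (p : M) (X : Set M) :
    BddBelow (dist p '' (X \ {p})) :=
  ⟨0, by rintro _ ⟨y, _, rfl⟩; exact dist_nonneg⟩

lemma nnd_le_dist {M : Type*} [MetricSpace M] (p : M) {X : Set M} {y : M}
    (hy : y ∈ X \ {p}) : nnd p X ≤ dist p y :=
  csInf_le (nnd_bddBelow p X) ⟨y, hy, rfl⟩

lemma le_nnd {M : Type*} [MetricSpace M] (p : M) {X : Set M} {r : ℝ}
    (hne : (X \ {p}).Nonempty) (h : ∀ y ∈ X \ {p}, r ≤ dist p y) : r ≤ nnd p X :=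
  le_csInf (hne.image _) (by rintro _ ⟨y, hy, rfl⟩; exact h y hy)

lemma infinite_piece {α β : Type*} {s : Set α} {t : Set β} (ht : t.Finite)
    (f : β → Set α) (hs : s.Infinite) (hsub : s ⊆ ⋃ b ∈ t, f b) :
    ∃ b ∈ t, (s ∩ f b).Infinite := by
  by_contra hall
  push_neg at hall
  try simp_rw [Set.not_infinite] at hall
  refine hs (Set.Finite.subset (ht.biUnion hall) ?_)
  intro a ha
  obtain ⟨b, hb, hfb⟩ := Set.mem_iUnion₂.1 (hsub ha)
  exact Set.mem_iUnion₂.2 ⟨b, hb, ha, hfb⟩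

/-- Let `M` be a compact metric space and `x : ℕ → M` a sequence such that every initial
segment `X_n = {x_0, …, x_n}` with at least two elements has at most `K` distinct nearest
neighbor distances.  Then only finitely many points of `X = {x_i : i ∈ ℕ}` are isolated
in `X`. -/
theorem finitely_many_isolated_points {M : Type*} [MetricSpace M] [CompactSpace M]
    (x : ℕ → M) (K : ℕ)
    (hK : ∀ n : ℕ, ({y | ∃ i : ℕ, i ≤ n ∧ y = x i} : Set M).Nontrivial →
      (NND {y | ∃ i : ℕ, i ≤ n ∧ y = x i}).encard ≤ K) :
    {p | p ∈ Set.range x ∧ ∃ U : Set M, IsOpen U ∧ p ∈ U ∧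
      ∀ q ∈ Set.range x, q ∈ U → q = p}.Finite := by
  classical
  set S := {p | p ∈ Set.range x ∧ ∃ U : Set M, IsOpen U ∧ p ∈ U ∧
      ∀ q ∈ Set.range x, q ∈ U → q = p} with hSdef
  by_contra hfin
  have hS : S.Infinite := hfin
  have hSsub : S ⊆ Set.range x := fun p hp => hp.1
  have hXinf : (Set.range x).Infinite := hS.mono hSsub
  set d : M → ℝ := fun p => nnd p (Set.range x) with hd
  have hdiff : ∀ p : M, (Set.range x \ {p}).Nonempty :=
    fun p => (hXinf.diff (Set.finite_singleton p)).nonempty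
  have hd_le : ∀ p : M, ∀ y ∈ Set.range x \ {p}, d p ≤ dist p y :=
    fun p y hy => nnd_le_dist p hy
  have hd_pos : ∀ p ∈ S, 0 < d p := by
    rintro p ⟨hpX, U, hU, hpU, hUiso⟩
    obtain ⟨r, hr, hball⟩ := Metric.isOpen_iff.1 hU p hpU
    refine lt_of_lt_of_le hr (le_nnd p (hdiff p) ?_)
    rintro y ⟨hyX, hyp⟩
    by_contra hlt
    push_neg at hlt
    exact hyp (hUiso y hyX (hball (by rwa [Metric.mem_ball, dist_comm])))
  -- d takes infinitely many values on S
  have hA : (d '' S).Infinite := by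
    intro hfinA
    obtain ⟨δ, hδmem, hT⟩ := infinite_piece hfinA (fun δ => {q | d q = δ}) hS
      (fun q hq => Set.mem_iUnion₂.2 ⟨d q, ⟨q, hq, rfl⟩, rfl⟩)
    obtain ⟨q₀, hq₀S, hq₀d⟩ := hδmem
    have hδpos : 0 < δ := hq₀d ▸ hd_pos q₀ hq₀S
    have hsep : ∀ q ∈ S ∩ {q | d q = δ}, ∀ q' ∈ S ∩ {q | d q = δ}, q ≠ q' → δ ≤ dist q q' := by
      rintro q ⟨hqS, hqd⟩ q' ⟨hq'S, _⟩ hne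
      have hmem : q' ∈ Set.range x \ {q} := ⟨hSsub hq'S, fun h => hne (h.symm)⟩
      calc δ = d q := hqd.symm
      _ ≤ dist q q' := hd_le q q' hmem
    obtain ⟨t, htfin, htcov⟩ :=
      (Metric.totallyBounded_iff.1 (isCompact_univ (X := M)).totallyBounded) (δ/2) (by linarith)
    obtain ⟨c, hct, hc⟩ := infinite_piece htfin (fun c => Metric.ball c (δ/2)) hT
      (fun q _ => htcov (Set.mem_univ q))
    obtain ⟨q, hq, q', hq', hne⟩ := hc.nontrivial
    have h1 := hsep q hq.1 q' hq'.1 hne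
    have h2 : dist q c < δ/2 := Metric.mem_ball.1 hq.2
    have h3 : dist q' c < δ/2 := Metric.mem_ball.1 hq'.2
    have h4 := dist_triangle q c q'
    rw [dist_comm c q'] at h4
    linarith
  -- pick K+2 distinct values
  obtain ⟨F, hFsub, hFcard⟩ := hA.exists_subset_card_eq (K + 2)
  set P := (F.offDiag).image (fun p => |p.1 - p.2|) with hP
  have hPne : P.Nonempty := by
    obtain ⟨a, ha, b, hb, hab⟩ := Finset.one_lt_card.1 (by omega : 1 < F.card)
    exact ⟨|a - b|, Finset.mem_image.2 ⟨(a, b), Finset.mem_offDiag.2 ⟨ha, hb, hab⟩, rfl⟩⟩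
  set ε := P.min' hPne with hε
  have hεpos : 0 < ε := by
    have hm := P.min'_mem hPne
    obtain ⟨⟨a, b⟩, hmem, heq⟩ := Finset.mem_image.1 hm
    obtain ⟨_, _, hab⟩ := Finset.mem_offDiag.1 hmem
    rw [hε, ← heq]
    exact abs_pos.2 (sub_ne_zero.2 hab)
  have hεle : ∀ a ∈ F, ∀ b ∈ F, a ≠ b → ε ≤ |a - b| := fun a ha b hb hab =>
    P.min'_le _ (Finset.mem_image.2 ⟨(a, b), Finset.mem_offDiag.2 ⟨ha, hb, hab⟩, rfl⟩)
  have key : ∀ δ : ℝ, ∃ i j : ℕ, δ ∈ F →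
      x i ∈ S ∧ d (x i) = δ ∧ x j ≠ x i ∧ dist (x i) (x j) < δ + ε := by
    intro δ
    by_cases hδ : δ ∈ F
    · obtain ⟨q, hqS, hqd⟩ := hFsub hδ
      obtain ⟨i, hi⟩ := hSsub hqS
      have hlt : sInf (dist q '' (Set.range x \ {q})) < δ + ε := by
        have : d q = δ := hqd
        rw [hd] at this
        simp only [nnd] at this ⊢
        rw [this]; linarith
      obtain ⟨z, hz, hzlt⟩ := exists_lt_of_csInf_lt ((hdiff q).image _) hlt
      obtain ⟨y, hy, rfl⟩ := hz
      obtain ⟨j, hj⟩ := hy.1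
      subst hi
      refine ⟨i, j, fun _ => ⟨hqS, hqd, ?_, ?_⟩⟩
      · rw [hj]; exact fun h => hy.2 (h ▸ rfl)
      · rw [hj]; exact hzlt
    · exact ⟨0, 0, fun h => absurd h hδ⟩
  choose I J hIJ using key
  set n := F.sup (fun δ => max (I δ) (J δ)) with hn
  set Xn := {y | ∃ i : ℕ, i ≤ n ∧ y = x i} with hXn
  have hmem : ∀ δ ∈ F, x (I δ) ∈ Xn ∧ x (J δ) ∈ Xn := fun δ hδ =>
    ⟨⟨I δ, le_trans (le_max_left (I δ) (J δ))
        (Finset.le_sup (f := fun δ => max (I δ) (J δ)) hδ), rfl⟩,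
     ⟨J δ, le_trans (le_max_right (I δ) (J δ))
        (Finset.le_sup (f := fun δ => max (I δ) (J δ)) hδ), rfl⟩⟩
  have hXnsub : Xn ⊆ Set.range x := by rintro y ⟨i, _, rfl⟩; exact ⟨i, rfl⟩
  set g : ℝ → ℝ := fun δ => nnd (x (I δ)) Xn with hg
  have hglb : ∀ δ ∈ F, δ ≤ g δ := by
    intro δ hδ
    obtain ⟨hS', hd', hne', hdist'⟩ := hIJ δ hδ
    refine le_nnd _ ⟨x (J δ), (hmem δ hδ).2, hne'⟩ ?_
    rintro y ⟨hyXn, hyne⟩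
    calc δ = d (x (I δ)) := hd'.symm
    _ ≤ dist (x (I δ)) y := hd_le _ y ⟨hXnsub hyXn, hyne⟩
  have hub : ∀ δ ∈ F, g δ < δ + ε := by
    intro δ hδ
    obtain ⟨_, _, hne', hdist'⟩ := hIJ δ hδ
    exact lt_of_le_of_lt (nnd_le_dist _ ⟨(hmem δ hδ).2, hne'⟩) hdist'
  have hinj : Set.InjOn g F := by
    intro a ha b hb hab_eq
    by_contra hne
    have hεab := hεle a ha b hb hne
    have h1 := hglb a ha
    have h2 := hub a ha
    have h3 := hglb b hb
    have h4 := hub b hb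
    rw [hab_eq] at h1 h2
    rcases lt_or_gt_of_ne hne with h | h
    · have habs : |a - b| = -(a - b) := abs_of_neg (by linarith)
      linarith
    · have habs : |a - b| = a - b := abs_of_pos (by linarith)
      linarith
  have hXn_nontriv : Xn.Nontrivial := by
    obtain ⟨δ₀, hδ₀⟩ := Finset.card_pos.1 (by omega : 0 < F.card)
    obtain ⟨_, _, hne', _⟩ := hIJ δ₀ hδ₀
    exact ⟨x (J δ₀), (hmem δ₀ hδ₀).2, x (I δ₀), (hmem δ₀ hδ₀).1, hne'⟩
  have himg : g '' (F : Set ℝ) ⊆ NND Xn := by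
    rintro _ ⟨δ, hδ, rfl⟩
    exact ⟨x (I δ), (hmem δ hδ).1, rfl⟩
  have hcard : ((K : ℕ∞) + 2) ≤ (NND Xn).encard := by
    calc ((K : ℕ∞) + 2) = ((K + 2 : ℕ) : ℕ∞) := by push_cast; ring
    _ = (F : Set ℝ).encard := by rw [Set.encard_coe_eq_coe_finsetCard, hFcard]
    _ = (g '' (F : Set ℝ)).encard := (hinj.encard_image).symm
    _ ≤ (NND Xn).encard := Set.encard_mono himg
  have hle := hK n hXn_nontriv
  have hfinal : ((K : ℕ∞) + 2) ≤ (K : ℕ∞) := le_trans hcard hle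
  have : (K + 2 : ℕ) ≤ K := by exact_mod_cast hfinal
  omega
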